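/- Let a > 0, T > 0, let g₀ : ℝ → ℝ be nonnegative and integrable, and let F : [0,T] × ℝ → ℝ be nonnegative, measurable, and integrable in x for each s with s ↦ ∫_ℝ F(s,y)dy integrable on [0,T]. Define g(t,x) = g₀(x + a·t) + ∫₀ᵗ F(s, x + a·(t-s)) ds. Then for every x ∈ ℝ, ∫₀ᵀ g(t,x) dt ≤ (1/a)·∫_ℝ g₀(y) dy + (1/a)·∫₀ᵀ ∫_ℝ F(s,y) dy ds. -/

import Mathlib

open MeasureTheory Set

/-- Change of variables for an affine map in a Lebesgue integral. -/
lemma lintegral_affine_aux (a : ℝ) (ha : 0 < a) (c : ℝ) (φ : ℝ → ENNReal)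
    (hφ : AEMeasurable φ) :
    ∫⁻ t, φ (c + a * t) = ENNReal.ofReal (1 / a) * ∫⁻ y, φ y := by
  have hmap : Measure.map (fun t : ℝ => c + a * t) volume
      = ENNReal.ofReal (1 / a) • volume := by
    have h1 : (fun t : ℝ => c + a * t) = (fun y : ℝ => c + y) ∘ (fun t : ℝ => a * t) := rfl
    rw [h1, ← Measure.map_map (measurable_const_add c) (measurable_const_mul a),
      Real.map_volume_mul_left ha.ne', Measure.map_smul,
      (measurePreserving_add_left volume c).map_eq, abs_of_pos (inv_pos.2 ha), one_div]
  have hmeas : Measurable (fun t : ℝ => c + a * t) :=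
    (measurable_const_mul a).const_add c
  have hφ' : AEMeasurable φ (Measure.map (fun t : ℝ => c + a * t) volume) := by
    rw [hmap]; exact hφ.smul_measure _
  rw [← lintegral_map' hφ' hmeas.aemeasurable, hmap, lintegral_smul_measure, smul_eq_mul]

/-- Transport estimate: for `g(t,x) = g₀(x + at) + ∫₀ᵗ F(s, x + a(t-s)) ds`
with `a > 0` and nonnegative data, for every `x`,
`∫₀ᵀ g(t,x) dt ≤ (1/a)∫ g₀ + (1/a)∫₀ᵀ ∫ F(s,y) dy ds`. -/
theorem stmt15 (a T : ℝ) (ha : 0 < a) (hT : 0 < T)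
    (g₀ : ℝ → ℝ) (hg₀pos : ∀ y, 0 ≤ g₀ y) (hg₀int : Integrable g₀)
    (F : ℝ × ℝ → ℝ) (hFpos : ∀ s y : ℝ, 0 ≤ F (s, y)) (hFmeas : Measurable F)
    (hFint : ∀ s : ℝ, Integrable fun y => F (s, y))
    (hFint2 : IntegrableOn (fun s => ∫ y, F (s, y)) (Set.Icc 0 T)) :
    ∀ x : ℝ,
      (∫ t in (0 : ℝ)..T,
          (g₀ (x + a * t) + ∫ s in (0 : ℝ)..t, F (s, x + a * (t - s)))) ≤
        (1 / a) * (∫ y, g₀ y) + (1 / a) * ∫ s in (0 : ℝ)..T, ∫ y, F (s, y) := by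
  intro x
  have ha' : (0:ℝ) ≤ 1 / a := by positivity
  have hg₀nn : (0:ℝ) ≤ ∫ y, g₀ y := integral_nonneg hg₀pos
  have hFsnn : ∀ s : ℝ, (0:ℝ) ≤ ∫ y, F (s, y) := fun s => integral_nonneg (hFpos s)
  have hRHS2 : (0:ℝ) ≤ ∫ s in (0:ℝ)..T, ∫ y, F (s, y) :=
    intervalIntegral.integral_nonneg hT.le fun s _ => hFsnn s
  have hRHS : (0:ℝ) ≤ (1 / a) * (∫ y, g₀ y) + (1 / a) * ∫ s in (0:ℝ)..T, ∫ y, F (s, y) :=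
    add_nonneg (mul_nonneg ha' hg₀nn) (mul_nonneg ha' hRHS2)
  set G : ℝ → ℝ := fun t => g₀ (x + a * t) + ∫ s in (0:ℝ)..t, F (s, x + a * (t - s)) with hGdef
  by_cases hInt : IntervalIntegrable G volume 0 T
  swap
  · rw [intervalIntegral.integral_undef hInt]; exact hRHS
  have hIntOn : IntegrableOn G (Ioc 0 T) :=
    (intervalIntegrable_iff_integrableOn_Ioc_of_le hT.le).mp hInt
  have hGnn : ∀ t ∈ Ioc (0:ℝ) T, 0 ≤ G t := fun t ht =>
    add_nonneg (hg₀pos _) (intervalIntegral.integral_nonneg ht.1.le fun s _ => hFpos _ _)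
  have hGnn' : 0 ≤ᵐ[volume.restrict (Ioc (0:ℝ) T)] G :=
    (ae_restrict_iff' measurableSet_Ioc).2 (ae_of_all _ hGnn)
  -- the two component functions
  set A : ℝ → ENNReal := fun t => ENNReal.ofReal (g₀ (x + a * t)) with hAdef
  set f : ℝ → ℝ → ENNReal := fun s t => ENNReal.ofReal (F (s, x + a * (t - s))) with hfdef
  have hg₀m : AEMeasurable g₀ := hg₀int.aemeasurable
  have hqmp : Measure.QuasiMeasurePreserving (fun t : ℝ => x + a * t) volume volume := by
    refine ⟨(measurable_const_mul a).const_add x, ?_⟩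
    have h1 : (fun t : ℝ => x + a * t) = (fun y : ℝ => x + y) ∘ (fun t : ℝ => a * t) := rfl
    rw [h1, ← Measure.map_map (measurable_const_add x) (measurable_const_mul a),
      Real.map_volume_mul_left ha.ne', Measure.map_smul,
      (measurePreserving_add_left volume x).map_eq]
    exact Measure.smul_absolutelyContinuous
  have hAm : AEMeasurable A := (hg₀m.comp_quasiMeasurePreserving hqmp).ennreal_ofReal
  have hfm : Measurable (Function.uncurry f) := by
    apply Measurable.ennreal_ofReal
    exact hFmeas.comp (measurable_fst.prodMk
      (measurable_const.add (measurable_const.mul (measurable_snd.sub measurable_fst))))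
  -- main chain in ENNReal
  have key : ENNReal.ofReal (∫ t in Ioc (0:ℝ) T, G t) ≤
      ENNReal.ofReal (1/a) * ENNReal.ofReal (∫ y, g₀ y)
      + ENNReal.ofReal (1/a) * ENNReal.ofReal (∫ s in Ioc (0:ℝ) T, ∫ y, F (s, y)) := by
    rw [ofReal_integral_eq_lintegral_ofReal hIntOn hGnn']
    have hsplit : ∫⁻ t in Ioc (0:ℝ) T, ENNReal.ofReal (G t) ≤
        (∫⁻ t in Ioc (0:ℝ) T, A t) + ∫⁻ t in Ioc (0:ℝ) T,
          ENNReal.ofReal (∫ s in (0:ℝ)..t, F (s, x + a * (t - s))) := by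
      rw [← lintegral_add_left' (hAm.restrict)]
      refine lintegral_mono_ae ?_
      filter_upwards [ae_restrict_mem measurableSet_Ioc] with t ht
      rw [hGdef]
      simp only [A]
      rw [ENNReal.ofReal_add (hg₀pos _)
        (intervalIntegral.integral_nonneg ht.1.le fun s _ => hFpos _ _)]
    refine hsplit.trans (add_le_add ?_ ?_)
    · -- first term
      calc ∫⁻ t in Ioc (0:ℝ) T, A t ≤ ∫⁻ t, A t := setLIntegral_le_lintegral _ _
        _ = ENNReal.ofReal (1/a) * ∫⁻ y, ENNReal.ofReal (g₀ y) :=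
            lintegral_affine_aux a ha x _ hg₀m.ennreal_ofReal
        _ = ENNReal.ofReal (1/a) * ENNReal.ofReal (∫ y, g₀ y) := by
            rw [← ofReal_integral_eq_lintegral_ofReal hg₀int (ae_of_all _ hg₀pos)]
    · -- second term
      have step1 : ∀ t ∈ Ioc (0:ℝ) T,
          ENNReal.ofReal (∫ s in (0:ℝ)..t, F (s, x + a * (t - s))) ≤
            ∫⁻ s in Ioc (0:ℝ) t, f s t := by
        intro t ht
        rw [intervalIntegral.integral_of_le ht.1.le]
        by_cases hi : IntegrableOn (fun s => F (s, x + a * (t - s))) (Ioc 0 t)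
        · rw [ofReal_integral_eq_lintegral_ofReal hi (ae_of_all _ fun s => hFpos _ _)]
        · rw [integral_undef hi]; simp
      calc ∫⁻ t in Ioc (0:ℝ) T,
            ENNReal.ofReal (∫ s in (0:ℝ)..t, F (s, x + a * (t - s)))
          ≤ ∫⁻ t in Ioc (0:ℝ) T, ∫⁻ s in Ioc (0:ℝ) t, f s t := by
            refine lintegral_mono_ae ?_
            filter_upwards [ae_restrict_mem measurableSet_Ioc] with t ht
            exact step1 t ht
        _ = ∫⁻ t in Ioc (0:ℝ) T, ∫⁻ s in Ioc (0:ℝ) T,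
              (if s ∈ Ioc (0:ℝ) t then f s t else 0) := by
            refine lintegral_congr_ae ?_
            filter_upwards [ae_restrict_mem measurableSet_Ioc] with t ht
            have hind : (fun s => if s ∈ Ioc (0:ℝ) t then f s t else 0)
                = (Ioc (0:ℝ) t).indicator (fun s => f s t) := by
              ext s'; simp [Set.indicator_apply]
            rw [hind, lintegral_indicator measurableSet_Ioc, Measure.restrict_restrict measurableSet_Ioc,
              Set.Ioc_inter_Ioc]
            congr 1
            rw [max_self, min_eq_left ht.2]
        _ = ∫⁻ s in Ioc (0:ℝ) T, ∫⁻ t in Ioc (0:ℝ) T,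
              (if s ∈ Ioc (0:ℝ) t then f s t else 0) := by
            apply lintegral_lintegral_swap
            apply Measurable.aemeasurable
            apply Measurable.ite _ (hfm.comp measurable_swap) measurable_const
            have : {p : ℝ × ℝ | p.2 ∈ Ioc (0:ℝ) p.1} = {p : ℝ × ℝ | 0 < p.2} ∩ {p | p.2 ≤ p.1} := by
              ext p; simp [Set.mem_Ioc, and_comm]
            rw [show (fun p : ℝ × ℝ => p.2 ∈ Ioc (0:ℝ) p.1) = fun p => p ∈ {p : ℝ × ℝ | p.2 ∈ Ioc (0:ℝ) p.1} from rfl]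
            rw [this]
            exact (measurableSet_lt measurable_const measurable_snd).inter
              (measurableSet_le measurable_snd measurable_fst)
        _ ≤ ∫⁻ s in Ioc (0:ℝ) T, ENNReal.ofReal (1/a) * ENNReal.ofReal (∫ y, F (s, y)) := by
            refine lintegral_mono fun s => ?_
            calc ∫⁻ t in Ioc (0:ℝ) T, (if s ∈ Ioc (0:ℝ) t then f s t else 0)
                ≤ ∫⁻ t, f s t := by
                  refine (setLIntegral_le_lintegral _ _).trans (lintegral_mono fun t => ?_)
                  split <;> simp
              _ = ENNReal.ofReal (1/a) * ∫⁻ y, ENNReal.ofReal (F (s, y)) := by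
                  have := lintegral_affine_aux a ha (x - a * s)
                    (fun y => ENNReal.ofReal (F (s, y)))
                    ((hFmeas.comp (measurable_prodMk_left)).ennreal_ofReal.aemeasurable)
                  rw [← this]
                  congr 1; ext t; rw [hfdef]; ring_nf
              _ = ENNReal.ofReal (1/a) * ENNReal.ofReal (∫ y, F (s, y)) := by
                  rw [← ofReal_integral_eq_lintegral_ofReal (hFint s)
                    (ae_of_all _ fun y => hFpos s y)]
        _ = ENNReal.ofReal (1/a) * ∫⁻ s in Ioc (0:ℝ) T, ENNReal.ofReal (∫ y, F (s, y)) :=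
            lintegral_const_mul' _ _ ENNReal.ofReal_ne_top
        _ = ENNReal.ofReal (1/a) * ENNReal.ofReal (∫ s in Ioc (0:ℝ) T, ∫ y, F (s, y)) := by
            rw [← ofReal_integral_eq_lintegral_ofReal
              (hFint2.mono_set Set.Ioc_subset_Icc_self)
              ((ae_restrict_iff' measurableSet_Ioc).2 (ae_of_all _ fun s _ => hFsnn s))]
  -- conclude
  rw [intervalIntegral.integral_of_le hT.le]
  have hIocT : (∫ s in (0:ℝ)..T, ∫ y, F (s, y)) = ∫ s in Ioc (0:ℝ) T, ∫ y, F (s, y) :=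
    intervalIntegral.integral_of_le hT.le
  rw [← ENNReal.ofReal_le_ofReal_iff hRHS]
  refine key.trans (le_of_eq ?_)
  rw [← ENNReal.ofReal_mul ha', ← ENNReal.ofReal_mul ha',
    ← ENNReal.ofReal_add (mul_nonneg ha' hg₀nn)
      (mul_nonneg ha' (hIocT ▸ hRHS2)), hIocT]
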